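/- Let X be a real vector space with cone K such that span(K) has dimension at least 2 and K has a nonzero extremal element. Let v be an extremal of K, f ∈ K' with f(v) ≠ 0, S a cone automorphism, and u ∈ K \ ℝ₊·S(v). Then T(x) := S(x) + f(x)·u is positive and invertible, but T⁻¹ is not positive. -/
import Mathlib


/-- `x` is an extremal element of the cone `K`. -/
def IsExtremal {X : Type*} [AddCommGroup X] [Module ℝ X] (K : Set X) (x : X) : Prop :=
  x ∈ K ∧ ∀ z, z ∈ K → x - z ∈ K → ∃ l : ℝ, 0 ≤ l ∧ l ≤ 1 ∧ z = l • x

theorem stmt_14 {X : Type*} [AddCommGroup X] [Module ℝ X] (K : Set X)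
    (hadd : ∀ x ∈ K, ∀ y ∈ K, x + y ∈ K)
    (hsmul : ∀ (c : ℝ), 0 ≤ c → ∀ x ∈ K, c • x ∈ K)
    (hpointed : ∀ x ∈ K, -x ∈ K → x = 0)
    (hdim : 2 ≤ Module.rank ℝ (Submodule.span ℝ K))
    (v : X) (hv : IsExtremal K v) (hv0 : v ≠ 0)
    (f : X →ₗ[ℝ] ℝ) (hf : ∀ x ∈ K, 0 ≤ f x) (hfv : f v ≠ 0)
    (S : X ≃ₗ[ℝ] X) (hS : ∀ x ∈ K, S x ∈ K) (hS' : ∀ x ∈ K, S.symm x ∈ K)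
    (u : X) (hu : u ∈ K) (hu' : ∀ l : ℝ, 0 ≤ l → u ≠ l • S v)
    (T : X → X) (hT : ∀ x, T x = S x + f x • u) :
    (∀ x ∈ K, T x ∈ K) ∧ Function.Bijective T ∧ ∃ x, x ∉ K ∧ T x ∈ K := by
  have hSu : S.symm u ∈ K := hS' u hu
  set c : ℝ := 1 + f (S.symm u) with hc
  have hc0 : 0 < c := by have := hf _ hSu; rw [hc]; linarith
  have hcne : c ≠ 0 := ne_of_gt hc0
  refine ⟨?_, ?_, ?_⟩
  · intro x hx
    rw [hT]
    exact hadd _ (hS x hx) _ (hsmul _ (hf x hx) u hu)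
  · refine Function.bijective_iff_has_inverse.mpr
      ⟨fun y => S.symm y - (f (S.symm y) / c) • S.symm u, ?_, ?_⟩
    · intro x
      rw [hT]
      simp only [map_add, map_smul, LinearEquiv.symm_apply_apply, smul_eq_mul]
      have hcoef : (f x + f x * f (S.symm u)) / c = f x := by
        field_simp [hc]; ring
      rw [hcoef]
      abel
    · intro y
      rw [hT]
      simp only [map_sub, map_smul, LinearEquiv.apply_symm_apply, smul_eq_mul]
      have hcoef : f (S.symm y) - f (S.symm y) / c * f (S.symm u) = f (S.symm y) / c := by
        field_simp [hc]; ring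
      rw [hcoef]
      abel
  · refine ⟨v - (f v / c) • S.symm u, ?_, ?_⟩
    · intro hx
      set x : X := v - (f v / c) • S.symm u with hxdef
      have hTx : S x + f x • u = S v := by
        rw [hxdef]
        simp only [map_sub, map_smul, LinearEquiv.apply_symm_apply, smul_eq_mul]
        have hcoef : f v - f v / c * f (S.symm u) = f v / c := by
          field_simp [hc]; ring
        rw [hcoef]
        abel
      have hfx : 0 ≤ f x := hf x hx
      have hz : f x • u ∈ K := hsmul _ hfx u hu
      have hz' : S.symm (f x • u) ∈ K := hS' _ hz
      have hvz : v - S.symm (f x • u) ∈ K := by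
        have : v - S.symm (f x • u) = x := by
          have := congrArg S.symm hTx
          simp only [map_add, LinearEquiv.symm_apply_apply] at this
          rw [← this]; abel
        rw [this]; exact hx
      obtain ⟨l, hl0, hl1, hleq⟩ := hv.2 _ hz' hvz
      have hzeq : f x • u = l • S v := by
        have := congrArg S hleq
        simpa [map_smul] using this
      rcases eq_or_ne (f x) 0 with h0 | h0
      · have hl : l • v = 0 := by
          rw [← hleq, h0]; simp
        rcases smul_eq_zero.mp hl with hl | hv'
        · rw [hl] at hleq
          simp at hleq
          have : S x = S v := by rw [← hTx, h0]; simp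
          have hxv : x = v := S.injective this
          rw [hxv] at h0
          exact hfv h0
        · exact hv0 hv'
      · have hfx' : 0 < f x := lt_of_le_of_ne hfx (Ne.symm h0)
        have : u = (l / f x) • S v := by
          have := congrArg (fun w => (f x)⁻¹ • w) hzeq
          simpa [smul_smul, inv_mul_cancel₀ h0, div_eq_inv_mul] using this
        exact hu' (l / f x) (div_nonneg hl0 hfx) this
    · rw [hT]
      simp only [map_sub, map_smul, LinearEquiv.apply_symm_apply, smul_eq_mul]
      have hcoef : f v - f v / c * f (S.symm u) = f v / c := by
        field_simp [hc]; ring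
      rw [hcoef]
      have : S v - (f v / c) • u + (f v / c) • u = S v := by abel
      rw [this]
      exact hS v hv.1
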